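/- Let c ∈ ℝ, let n ≥ 1 be an integer, and let f : [0,π] → ℝ be continuously differentiable with f(0) = 0 and f(π) = 0. Then ∫₀^π (f'(x) + c f(x)) ψ_n(x) dx = √(n² + c²) · ∫₀^π f(x) √(2/π) sin(nx) dx, where ψ_n(x) := (n² + c²)^{−1/2} √(2/π) (n cos(nx) + c sin(nx)). -/

import Mathlib

noncomputable section

/-- The Robin eigenfunctions `ψ_n = (n²+c²)^{-1/2} A φ_n^D` on `[0,π]`. -/
def robinEigen (c : ℝ) (n : ℕ) (x : ℝ) : ℝ :=
  (Real.sqrt ((n : ℝ) ^ 2 + c ^ 2))⁻¹ * Real.sqrt (2 / Real.pi) *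
    ((n : ℝ) * Real.cos ((n : ℝ) * x) + c * Real.sin ((n : ℝ) * x))

theorem intertwining_robin_dirichlet (c : ℝ) (n : ℕ) (hn : 1 ≤ n) (f : ℝ → ℝ)
    (hf : ContDiffOn ℝ 1 f (Set.Icc 0 Real.pi)) (hf0 : f 0 = 0) (hfπ : f Real.pi = 0) :
    ∫ x in (0 : ℝ)..Real.pi, (deriv f x + c * f x) * robinEigen c n x =
      Real.sqrt ((n : ℝ) ^ 2 + c ^ 2) *
        ∫ x in (0 : ℝ)..Real.pi, f x * (Real.sqrt (2 / Real.pi) * Real.sin ((n : ℝ) * x)) := by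
  have hπ : (0 : ℝ) ≤ Real.pi := Real.pi_pos.le
  have huIcc : Set.uIcc (0 : ℝ) Real.pi = Set.Icc 0 Real.pi := Set.uIcc_of_le hπ
  set s : ℝ := Real.sqrt ((n : ℝ) ^ 2 + c ^ 2) with hs_def
  set K : ℝ := Real.sqrt (2 / Real.pi) with hK_def
  have hpos : (0 : ℝ) < (n : ℝ) ^ 2 + c ^ 2 := by
    have : (1 : ℝ) ≤ (n : ℝ) := by exact_mod_cast hn
    nlinarith [sq_nonneg c]
  have hs2 : s ^ 2 = (n : ℝ) ^ 2 + c ^ 2 := Real.sq_sqrt hpos.le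
  have hs_ne : s ≠ 0 := by
    have := Real.sqrt_pos.mpr hpos
    exact ne_of_gt this
  -- derivative of the Robin eigenfunction
  set D : ℝ → ℝ := fun x => s⁻¹ * K *
      (c * ((n : ℝ) * Real.cos ((n : ℝ) * x)) - (n : ℝ) * ((n : ℝ) * Real.sin ((n : ℝ) * x)))
    with hD_def
  have hψd : ∀ x : ℝ, HasDerivAt (robinEigen c n) (D x) x := by
    intro x
    have hcos : HasDerivAt (fun x : ℝ => Real.cos ((n : ℝ) * x))
        (-Real.sin ((n : ℝ) * x) * (n : ℝ)) x := by
      simpa [Function.comp_def] using (Real.hasDerivAt_cos ((n : ℝ) * x)).comp x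
        ((hasDerivAt_id x).const_mul (n : ℝ))
    have hsin : HasDerivAt (fun x : ℝ => Real.sin ((n : ℝ) * x))
        (Real.cos ((n : ℝ) * x) * (n : ℝ)) x := by
      simpa [Function.comp_def] using (Real.hasDerivAt_sin ((n : ℝ) * x)).comp x
        ((hasDerivAt_id x).const_mul (n : ℝ))
    have : HasDerivAt (fun x : ℝ =>
        s⁻¹ * K * ((n : ℝ) * Real.cos ((n : ℝ) * x) + c * Real.sin ((n : ℝ) * x)))
        (s⁻¹ * K * ((n : ℝ) * (-Real.sin ((n : ℝ) * x) * (n : ℝ)) +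
          c * (Real.cos ((n : ℝ) * x) * (n : ℝ)))) x :=
      (((hcos.const_mul (n : ℝ)).add (hsin.const_mul c)).const_mul (s⁻¹ * K))
    have heq : D x = s⁻¹ * K * ((n : ℝ) * (-Real.sin ((n : ℝ) * x) * (n : ℝ)) +
        c * (Real.cos ((n : ℝ) * x) * (n : ℝ))) := by
      simp only [hD_def]; ring
    rw [heq]
    exact this
  have hψc : Continuous (robinEigen c n) := by
    unfold robinEigen
    fun_prop
  have hDc : Continuous D := by
    simp only [hD_def]
    fun_prop
  have hfc : ContinuousOn f (Set.Icc 0 Real.pi) := hf.continuousOn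
  -- derivative of f on the open interval
  have hfd : ∀ x ∈ Set.Ioo (0 : ℝ) Real.pi, HasDerivAt f (deriv f x) x := by
    intro x hx
    have hmem : Set.Icc (0 : ℝ) Real.pi ∈ nhds x := Icc_mem_nhds hx.1 hx.2
    have hdiff : DifferentiableWithinAt ℝ f (Set.Icc 0 Real.pi) x :=
      (hf.differentiableOn one_ne_zero) x (Set.mem_Icc_of_Ioo hx)
    exact (hdiff.differentiableAt hmem).hasDerivAt
  -- integrability of deriv f
  have hderiv_int : IntervalIntegrable (deriv f) MeasureTheory.volume 0 Real.pi := by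
    have hUD : UniqueDiffOn ℝ (Set.Icc (0 : ℝ) Real.pi) := uniqueDiffOn_Icc Real.pi_pos
    have hg : ContinuousOn (derivWithin f (Set.Icc 0 Real.pi)) (Set.Icc 0 Real.pi) :=
      hf.continuousOn_derivWithin hUD le_rfl
    have hgint : IntervalIntegrable (derivWithin f (Set.Icc 0 Real.pi))
        MeasureTheory.volume 0 Real.pi := by
      apply ContinuousOn.intervalIntegrable
      rw [huIcc]; exact hg
    rw [intervalIntegrable_iff_integrableOn_Ioc_of_le hπ] at hgint ⊢
    apply hgint.congr
    have hne : ∀ᵐ x ∂MeasureTheory.volume, x ≠ Real.pi := by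
      rw [MeasureTheory.ae_iff]
      have : {x : ℝ | ¬ x ≠ Real.pi} = {Real.pi} := by ext x; simp
      rw [this]
      exact Real.volume_singleton
    filter_upwards [MeasureTheory.ae_restrict_mem measurableSet_Ioc,
      MeasureTheory.ae_restrict_of_ae hne] with x hx hxne
    have hxIoo : x ∈ Set.Ioo (0 : ℝ) Real.pi := ⟨hx.1, lt_of_le_of_ne hx.2 hxne⟩
    exact derivWithin_of_mem_nhds (Icc_mem_nhds hxIoo.1 hxIoo.2)
  -- integration by parts
  have hibp : ∫ x in (0:ℝ)..Real.pi, (deriv f x * robinEigen c n x + f x * D x) =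
      f Real.pi * robinEigen c n Real.pi - f 0 * robinEigen c n 0 := by
    apply intervalIntegral.integral_deriv_mul_eq_sub_of_hasDerivAt
    · rw [huIcc]; exact hfc
    · exact hψc.continuousOn
    · intro x hx
      rw [min_eq_left hπ, max_eq_right hπ] at hx
      exact hfd x hx
    · intro x _
      exact hψd x
    · exact hderiv_int
    · exact (hDc.continuousOn).intervalIntegrable
  rw [hf0, hfπ, zero_mul, zero_mul, sub_zero] at hibp
  -- pointwise identity: c ψ - D = s K sin
  have hkey : ∀ x : ℝ, c * robinEigen c n x - D x = s * (K * Real.sin ((n : ℝ) * x)) := by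
    intro x
    have hsi : s⁻¹ * ((n : ℝ) ^ 2 + c ^ 2) = s := by
      rw [← hs2]; field_simp
    unfold robinEigen
    rw [← hs_def, ← hK_def]
    calc c * (s⁻¹ * K * ((n : ℝ) * Real.cos ((n : ℝ) * x) + c * Real.sin ((n : ℝ) * x))) - D x
        = s⁻¹ * ((n : ℝ) ^ 2 + c ^ 2) * (K * Real.sin ((n : ℝ) * x)) := by
          simp only [hD_def]; ring
      _ = s * (K * Real.sin ((n : ℝ) * x)) := by rw [hsi]
  have hsplit : ∀ x : ℝ, (deriv f x + c * f x) * robinEigen c n x =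
      (deriv f x * robinEigen c n x + f x * D x) + f x * (c * robinEigen c n x - D x) := by
    intro x; ring
  have hint1 : IntervalIntegrable (fun x => deriv f x * robinEigen c n x + f x * D x)
      MeasureTheory.volume 0 Real.pi := by
    apply IntervalIntegrable.add
    · exact hderiv_int.mul_continuousOn hψc.continuousOn
    · apply ContinuousOn.intervalIntegrable
      rw [huIcc]
      exact hfc.mul hDc.continuousOn
  have hint2 : IntervalIntegrable (fun x => f x * (c * robinEigen c n x - D x))
      MeasureTheory.volume 0 Real.pi := by
    apply ContinuousOn.intervalIntegrable
    rw [huIcc]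
    exact hfc.mul ((continuous_const.mul hψc).sub hDc).continuousOn
  calc ∫ x in (0:ℝ)..Real.pi, (deriv f x + c * f x) * robinEigen c n x
      = ∫ x in (0:ℝ)..Real.pi,
          ((deriv f x * robinEigen c n x + f x * D x) + f x * (c * robinEigen c n x - D x)) := by
        apply intervalIntegral.integral_congr
        intro x _
        exact hsplit x
    _ = (∫ x in (0:ℝ)..Real.pi, (deriv f x * robinEigen c n x + f x * D x)) +
        ∫ x in (0:ℝ)..Real.pi, f x * (c * robinEigen c n x - D x) :=
        intervalIntegral.integral_add hint1 hint2
    _ = ∫ x in (0:ℝ)..Real.pi, f x * (c * robinEigen c n x - D x) := by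
        rw [hibp, zero_add]
    _ = ∫ x in (0:ℝ)..Real.pi, s * (f x * (K * Real.sin ((n : ℝ) * x))) := by
        apply intervalIntegral.integral_congr
        intro x _
        dsimp only
        rw [hkey x]; ring
    _ = s * ∫ x in (0:ℝ)..Real.pi, f x * (K * Real.sin ((n : ℝ) * x)) :=
        intervalIntegral.integral_const_mul s _
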